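/- Let H and G₁, …, G_p be finite-dimensional real inner product spaces, let f : H → ℝ ∪ {+∞} be proper, lower semicontinuous, and convex, and for each k ∈ {1,…,p} let h_k : G_k → ℝ ∪ {+∞} be proper, lower semicontinuous, and convex, let L_k : H → G_k be a nonzero linear map, and let ω_k > 0 and ρ_k > 0. Assume the problem minimize over x ∈ H of f(x) + ∑_{k=1}^p ω_k (ʰρ_k h_k)(L_k x) has a solution. Set β = ∑_{k=1}^p ω_k ‖L_k‖²/ρ_k, fix x₀ ∈ H, 0 < ε < 1/β, and a sequence (γₙ) in [ε, 2/β − ε], and iterate: z_{n,k} = (ω_k/ρ_k) L_k*( L_k xₙ − prox_{ρ_k h_k}(L_k xₙ) ) for k = 1,…,p; yₙ = xₙ − γₙ ∑_{k=1}^p z_{n,k}; xₙ₊₁ = prox_{γₙ f} yₙ. Then (xₙ) converges to a solution of the minimization problem. -/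

import Mathlib

open Filter Topology
open scoped RealInnerProductSpace

set_option maxHeartbeats 2000000

noncomputable section

/-- Convexity for extended-real-valued functions. -/
def ConvexE {E : Type*} [AddCommGroup E] [Module ℝ E] (f : E → EReal) : Prop :=
  ∀ x y : E, ∀ a b : ℝ, 0 ≤ a → 0 ≤ b → a + b = 1 →
    f (a • x + b • y) ≤ (a : EReal) * f x + (b : EReal) * f y

lemma ereal_coe_sum {ι : Type*} (s : Finset ι) (f : ι → ℝ) :
    ((∑ i ∈ s, f i : ℝ) : EReal) = ∑ i ∈ s, ((f i : ℝ) : EReal) :=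
  map_sum (⟨⟨Real.toEReal, EReal.coe_zero⟩, EReal.coe_add⟩ : ℝ →+ EReal) f s

lemma lsc_seq {E : Type*} [TopologicalSpace E] {φ : E → EReal}
    (h : LowerSemicontinuous φ) {x : ℕ → E} {xb : E}
    (hx : Tendsto x atTop (𝓝 xb)) {r : ℕ → ℝ} {rl : ℝ}
    (hr : Tendsto r atTop (𝓝 rl)) (hle : ∀ n, φ (x n) ≤ ((r n : ℝ) : EReal)) :
    φ xb ≤ ((rl : ℝ) : EReal) := by
  by_contra hcon
  push_neg at hcon
  obtain ⟨c, hc1, hc2⟩ := EReal.lt_iff_exists_real_btwn.1 hcon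
  have h1 : ∀ᶠ n in atTop, (c : EReal) < φ (x n) :=
    hx.eventually (h xb (c : EReal) hc2)
  have h2 : ∀ᶠ n in atTop, r n < c :=
    hr.eventually_lt_const (by exact_mod_cast hc1)
  obtain ⟨n, hn1, hn2⟩ := (h1.and h2).exists
  have : (c : EReal) < (r n : ℝ) := lt_of_lt_of_le hn1 (hle n)
  exact absurd (EReal.coe_lt_coe_iff.1 this) (not_lt.2 hn2.le)

lemma scale_div_ineq {ρ a b n1 n2 : ℝ} (hρ : 0 < ρ)
    (h : ρ*a + 1/2*n1 ≤ ρ*b + 1/2*n2) :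
    a + 1/(2*ρ)*n1 ≤ b + 1/(2*ρ)*n2 := by
  rw [← sub_nonneg]
  have hid : b + 1/(2*ρ)*n2 - (a + 1/(2*ρ)*n1)
      = (1/ρ) * ((ρ*b + 1/2*n2) - (ρ*a + 1/2*n1)) := by
    field_simp
  rw [hid]
  exact mul_nonneg (by positivity) (by linarith)

/-- variational inequality characterization from the prox minimization property -/
lemma prox_vi {E : Type*} [NormedAddCommGroup E] [InnerProductSpace ℝ E]
    {φ : E → EReal} (hconv : ConvexE φ) (hbot : ∀ z, φ z ≠ ⊥)
    (hproper : ∃ z, φ z ≠ ⊤) {c : ℝ} (hc : 0 < c) (y q : E)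
    (hq : ∀ w, (c : EReal) * φ q + ((1/2 * ‖y - q‖^2 : ℝ) : EReal) ≤
      (c : EReal) * φ w + ((1/2 * ‖y - w‖^2 : ℝ) : EReal)) :
    φ q ≠ ⊤ ∧ ∀ w, φ w ≠ ⊤ →
      c * ((φ q).toReal - (φ w).toReal) ≤ ⟪y - q, q - w⟫ := by
  obtain ⟨z₀, hz₀⟩ := hproper
  have hqtop : φ q ≠ ⊤ := by
    intro htop
    have h0 := hq z₀
    rw [htop] at h0
    rw [EReal.mul_top_of_pos (by exact_mod_cast hc)] at h0
    rw [EReal.top_add_coe] at h0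
    have hz0r : φ z₀ = ((φ z₀).toReal : ℝ) := (EReal.coe_toReal hz₀ (hbot z₀)).symm
    rw [hz0r, ← EReal.coe_mul, ← EReal.coe_add] at h0
    exact (EReal.coe_ne_top _) (top_le_iff.1 h0)
  refine ⟨hqtop, fun w hw => ?_⟩
  set A : ℝ := (φ q).toReal with hA
  set Bw : ℝ := (φ w).toReal with hBw
  have hφq : φ q = (A : ℝ) := (EReal.coe_toReal hqtop (hbot q)).symm
  have hφw : φ w = (Bw : ℝ) := (EReal.coe_toReal hw (hbot w)).symm
  have key : ∀ t : ℝ, 0 < t → t ≤ 1 →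
      c * (A - Bw) ≤ ⟪y - q, q - w⟫ + t * (‖w - q‖^2 / 2) := by
    intro t ht ht1
    set qt : E := q + t • (w - q) with hqt
    have hqt' : qt = (1 - t) • q + t • w := by
      rw [hqt]; module
    have hconvt : φ qt ≤ (((1 - t) * A + t * Bw : ℝ) : EReal) := by
      rw [hqt']
      calc φ ((1-t) • q + t • w) ≤ ((1-t : ℝ) : EReal) * φ q + ((t : ℝ) : EReal) * φ w :=
            hconv q w (1-t) t (by linarith) ht.le (by ring)
        _ = (((1 - t) * A + t * Bw : ℝ) : EReal) := by
            rw [hφq, hφw, ← EReal.coe_mul, ← EReal.coe_mul, ← EReal.coe_add]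
    have hqt_ne_top : φ qt ≠ ⊤ := fun htop => by
      rw [htop] at hconvt; exact (EReal.coe_ne_top _) (top_le_iff.1 hconvt)
    set R : ℝ := (φ qt).toReal with hR
    have hφqt : φ qt = (R : ℝ) := (EReal.coe_toReal hqt_ne_top (hbot qt)).symm
    have hRle : R ≤ (1 - t) * A + t * Bw := by
      rw [hφqt] at hconvt; exact_mod_cast hconvt
    have hmain := hq qt
    rw [hφq, hφqt, ← EReal.coe_mul, ← EReal.coe_mul, ← EReal.coe_add, ← EReal.coe_add,
      EReal.coe_le_coe_iff] at hmain
    have hnorm : ‖y - qt‖^2 = ‖y - q‖^2 - 2 * (t * ⟪y - q, w - q⟫) + t^2 * ‖w - q‖^2 := by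
      have : y - qt = (y - q) - t • (w - q) := by rw [hqt]; abel
      rw [this, norm_sub_sq_real, real_inner_smul_right, norm_smul]
      simp [mul_pow, sq_abs]
    have hip : ⟪y - q, q - w⟫ = -⟪y - q, w - q⟫ := by
      rw [show q - w = -(w - q) by abel, inner_neg_right]
    rw [hip]
    have step : t * (c * (A - Bw)) ≤ t * (-⟪y - q, w - q⟫ + t * (‖w - q‖^2 / 2)) := by
      nlinarith [hmain, hnorm, hRle, mul_le_mul_of_nonneg_left hRle (le_of_lt hc)]
    have := le_of_mul_le_mul_left step ht
    nlinarith [this, sq_nonneg t]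
  refine le_of_forall_pos_le_add (fun δ hδ => ?_)
  set t : ℝ := min 1 (δ / (‖w - q‖^2 / 2 + 1)) with htdef
  have hden : (0:ℝ) < ‖w - q‖^2 / 2 + 1 := by positivity
  have ht : 0 < t := lt_min one_pos (div_pos hδ hden)
  have ht1 : t ≤ 1 := min_le_left _ _
  have := key t ht ht1
  have hbound : t * (‖w - q‖^2 / 2) ≤ δ := by
    have h1 : t ≤ δ / (‖w - q‖^2 / 2 + 1) := min_le_right _ _
    have h2 : t * (‖w - q‖^2 / 2) ≤ (δ / (‖w - q‖^2 / 2 + 1)) * (‖w - q‖^2 / 2) :=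
      mul_le_mul_of_nonneg_right h1 (by positivity)
    calc t * (‖w - q‖^2 / 2) ≤ (δ / (‖w - q‖^2 / 2 + 1)) * (‖w - q‖^2 / 2) := h2
      _ ≤ δ := by
          rw [div_mul_eq_mul_div, div_le_iff₀ hden]
          nlinarith [sq_nonneg ‖w - q‖]
  linarith

/-- Convergence of the proximal gradient method for the problem
`minimize f(x) + ∑ₖ ωₖ (Moreau envelope of hₖ with parameter ρₖ)(Lₖ x)`. -/
theorem proximal_gradient_moreau_envelopes
    {H : Type*} [NormedAddCommGroup H] [InnerProductSpace ℝ H] [FiniteDimensional ℝ H]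
    {p : ℕ} {G : Fin p → Type*}
    [∀ k, NormedAddCommGroup (G k)] [∀ k, InnerProductSpace ℝ (G k)]
    [∀ k, FiniteDimensional ℝ (G k)]
    (f : H → EReal)
    (hf_proper : ∃ z, f z ≠ ⊤) (hf_ne_bot : ∀ z, f z ≠ ⊥)
    (hf_lsc : LowerSemicontinuous f) (hf_convex : ConvexE f)
    (h : ∀ k, G k → EReal)
    (hh_proper : ∀ k, ∃ v, h k v ≠ ⊤) (hh_ne_bot : ∀ k v, h k v ≠ ⊥)
    (hh_lsc : ∀ k, LowerSemicontinuous (h k)) (hh_convex : ∀ k, ConvexE (h k))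
    (L : ∀ k, H →L[ℝ] G k) (hL : ∀ k, L k ≠ 0)
    (ω : Fin p → ℝ) (hω : ∀ k, 0 < ω k)
    (ρ : Fin p → ℝ) (hρ : ∀ k, 0 < ρ k)
    -- existence of a solution of the minimization problem
    (xsol : H)
    (hsol : ∀ z : H,
      f xsol + ∑ k, (ω k : EReal) *
          ⨅ v : G k, (h k v + ((1/(2*ρ k) * ‖L k xsol - v‖^2 : ℝ) : EReal)) ≤
        f z + ∑ k, (ω k : EReal) *
          ⨅ v : G k, (h k v + ((1/(2*ρ k) * ‖L k z - v‖^2 : ℝ) : EReal)))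
    (β : ℝ) (hβ : β = ∑ k, ω k * ‖L k‖^2 / ρ k)
    (ε : ℝ) (hε : 0 < ε) (hεβ : ε < 1/β)
    (γ : ℕ → ℝ) (hγ : ∀ n, γ n ∈ Set.Icc ε (2/β - ε))
    -- proximity operators of the `ρ k • h k`
    (P : ∀ k, G k → G k)
    (hP : ∀ k, ∀ v w : G k,
      (ρ k : EReal) * h k (P k v) + ((1/2 * ‖v - P k v‖^2 : ℝ) : EReal) ≤
        (ρ k : EReal) * h k w + ((1/2 * ‖v - w‖^2 : ℝ) : EReal))
    -- the iterates: `x (n+1)` is the proximal point of `y n` relative to `γ n • f`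
    (x : ℕ → H)
    (hiter : ∀ n, ∀ w : H,
      (γ n : EReal) * f (x (n+1)) +
          ((1/2 * ‖(x n - γ n • ∑ k, (ω k / ρ k) •
              (ContinuousLinearMap.adjoint (L k)) (L k (x n) - P k (L k (x n)))) -
            x (n+1)‖^2 : ℝ) : EReal) ≤
        (γ n : EReal) * f w +
          ((1/2 * ‖(x n - γ n • ∑ k, (ω k / ρ k) •
              (ContinuousLinearMap.adjoint (L k)) (L k (x n) - P k (L k (x n)))) -
            w‖^2 : ℝ) : EReal)) :
    ∃ xlim : H, Tendsto x atTop (𝓝 xlim) ∧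
      ∀ z : H,
        f xlim + ∑ k, (ω k : EReal) *
            ⨅ v : G k, (h k v + ((1/(2*ρ k) * ‖L k xlim - v‖^2 : ℝ) : EReal)) ≤
          f z + ∑ k, (ω k : EReal) *
            ⨅ v : G k, (h k v + ((1/(2*ρ k) * ‖L k z - v‖^2 : ℝ) : EReal)) := by
  
  classical
  -- β is positive
  have hβ0 : 0 < β := by
    rcases Nat.eq_zero_or_pos p with hp | hp
    · exfalso
      haveI : IsEmpty (Fin p) := ⟨fun i => by have := i.isLt; omega⟩
      have hβz : β = 0 := by rw [hβ, Finset.univ_eq_empty, Finset.sum_empty]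
      rw [hβz] at hεβ
      norm_num at hεβ
      linarith
    · rw [hβ]
      apply Finset.sum_pos
      · intro k _
        have hLk : 0 < ‖L k‖ := norm_pos_iff.2 (hL k)
        have := hω k; have := hρ k
        positivity
      · exact ⟨⟨0, hp⟩, Finset.mem_univ _⟩
  obtain ⟨z₀, hz₀⟩ := hf_proper
  set fr : H → ℝ := fun z => (f z).toReal with hfrdef
  set hr : ∀ k, G k → ℝ := fun k v => (h k v).toReal with hhrdef
  -- prox variational inequalities for each h k
  have hPvi : ∀ k (v : G k), h k (P k v) ≠ ⊤ ∧ ∀ w, h k w ≠ ⊤ →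
      ρ k * (hr k (P k v) - hr k w) ≤ ⟪v - P k v, P k v - w⟫ :=
    fun k v => prox_vi (hh_convex k) (hh_ne_bot k) (hh_proper k) (hρ k) v (P k v) (hP k v)
  have hPfin : ∀ k (u : G k), h k (P k u) = ((hr k (P k u) : ℝ) : EReal) := fun k u =>
    (EReal.coe_toReal (hPvi k u).1 (hh_ne_bot k _)).symm
  have hPreal : ∀ k (u w : G k), h k w ≠ ⊤ →
      ρ k * hr k (P k u) + 1/2 * ‖u - P k u‖^2 ≤ ρ k * hr k w + 1/2 * ‖u - w‖^2 := by
    intro k u w hw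
    have hw' : h k w = ((hr k w : ℝ) : EReal) := (EReal.coe_toReal hw (hh_ne_bot k w)).symm
    have h0 := hP k u w
    rw [hPfin k u, hw', ← EReal.coe_mul, ← EReal.coe_mul, ← EReal.coe_add, ← EReal.coe_add,
      EReal.coe_le_coe_iff] at h0
    exact h0
  -- the (real-valued) Moreau envelopes and smooth part
  set e : ∀ k, G k → ℝ := fun k u => hr k (P k u) + 1/(2*ρ k) * ‖u - P k u‖^2 with hedef
  have EnvEq : ∀ k (u : G k),
      (⨅ v : G k, (h k v + ((1/(2*ρ k) * ‖u - v‖^2 : ℝ) : EReal))) = ((e k u : ℝ) : EReal) := by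
    intro k u
    apply le_antisymm
    · have h1 : (⨅ v : G k, (h k v + ((1/(2*ρ k) * ‖u - v‖^2 : ℝ) : EReal)))
          ≤ h k (P k u) + ((1/(2*ρ k) * ‖u - P k u‖^2 : ℝ) : EReal) :=
        iInf_le _ (P k u)
      rw [hPfin k u, ← EReal.coe_add] at h1
      exact h1
    · refine le_iInf fun v => ?_
      by_cases hv : h k v = ⊤
      · rw [hv, EReal.top_add_coe]; exact le_top
      · have hv' : h k v = ((hr k v : ℝ) : EReal) := (EReal.coe_toReal hv (hh_ne_bot k v)).symm
        rw [hv', ← EReal.coe_add, EReal.coe_le_coe_iff]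
        exact scale_div_ineq (hρ k) (hPreal k u v hv)
  set g : H → ℝ := fun z => ∑ k, ω k * e k (L k z) with hgdef
  have SumEq : ∀ z : H,
      (∑ k, (ω k : EReal) * ⨅ v : G k, (h k v + ((1/(2*ρ k) * ‖L k z - v‖^2 : ℝ) : EReal)))
        = ((g z : ℝ) : EReal) := by
    intro z
    rw [hgdef, ereal_coe_sum]
    exact Finset.sum_congr rfl fun k _ => by rw [EnvEq k (L k z), ← EReal.coe_mul]
  simp only [SumEq] at hsol
  -- the solution has finite f-value, real form of optimality
  have hz₀r : f z₀ = ((fr z₀ : ℝ) : EReal) := (EReal.coe_toReal hz₀ (hf_ne_bot z₀)).symm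
  have hsoltop : f xsol ≠ ⊤ := by
    intro htop
    have h0 := hsol z₀
    rw [htop, EReal.top_add_coe, hz₀r, ← EReal.coe_add] at h0
    exact (EReal.coe_ne_top _) (top_le_iff.1 h0)
  have hsolreal : ∀ z, f z ≠ ⊤ → fr xsol + g xsol ≤ fr z + g z := by
    intro z hz
    have h0 := hsol z
    rw [show f xsol = ((fr xsol : ℝ) : EReal) from (EReal.coe_toReal hsoltop (hf_ne_bot _)).symm,
      show f z = ((fr z : ℝ) : EReal) from (EReal.coe_toReal hz (hf_ne_bot _)).symm,
      ← EReal.coe_add, ← EReal.coe_add, EReal.coe_le_coe_iff] at h0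
    exact h0
  -- firm nonexpansiveness
  have firmP : ∀ k (v v' : G k), ‖P k v - P k v'‖^2 ≤ ⟪v - v', P k v - P k v'⟫ := by
    intro k v v'
    have h1 := (hPvi k v).2 (P k v') (hPvi k v').1
    have h2 := (hPvi k v').2 (P k v) (hPvi k v).1
    have e2 : ⟪v' - P k v', P k v' - P k v⟫ = -⟪v' - P k v', P k v - P k v'⟫ := by
      rw [show P k v' - P k v = -(P k v - P k v') from by abel, inner_neg_right]
    have e3 : ⟪v - P k v, P k v - P k v'⟫
        = ⟪v, P k v - P k v'⟫ - ⟪P k v, P k v - P k v'⟫ := inner_sub_left _ _ _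
    have e4 : ⟪v' - P k v', P k v - P k v'⟫
        = ⟪v', P k v - P k v'⟫ - ⟪P k v', P k v - P k v'⟫ := inner_sub_left _ _ _
    have e5 : ⟪v - v', P k v - P k v'⟫
        = ⟪v, P k v - P k v'⟫ - ⟪v', P k v - P k v'⟫ := inner_sub_left _ _ _
    have e6 : ‖P k v - P k v'‖^2
        = ⟪P k v, P k v - P k v'⟫ - ⟪P k v', P k v - P k v'⟫ := by
      rw [← real_inner_self_eq_norm_sq, inner_sub_left]
    rw [e2] at h2
    linarith [h1, h2, e3, e4, e5, e6]
  have firmQ : ∀ k (v v' : G k),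
      ‖(v - P k v) - (v' - P k v')‖^2 ≤ ⟪v - v', (v - P k v) - (v' - P k v')⟫ := by
    intro k v v'
    have hfp := firmP k v v'
    have h1 : (v - P k v) - (v' - P k v') = (v - v') - (P k v - P k v') := by abel
    have h2 : ‖(v - v') - (P k v - P k v')‖^2
        = ‖v - v'‖^2 - 2*⟪v - v', P k v - P k v'⟫ + ‖P k v - P k v'‖^2 :=
      norm_sub_sq_real _ _
    have h3 : ⟪v - v', (v - v') - (P k v - P k v')⟫
        = ‖v - v'‖^2 - ⟪v - v', P k v - P k v'⟫ := by
      rw [inner_sub_right, real_inner_self_eq_norm_sq]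
    rw [h1, h2, h3]
    linarith [hfp]
  -- the gradient-like map
  set B : H → H := fun z => ∑ k, (ω k / ρ k) •
      (ContinuousLinearMap.adjoint (L k)) (L k z - P k (L k z)) with hBdef
  have hBip : ∀ z d : H, ⟪B z, d⟫ = ∑ k, (ω k / ρ k) * ⟪L k z - P k (L k z), L k d⟫ := by
    intro z d
    simp only [hBdef]
    rw [sum_inner]
    exact Finset.sum_congr rfl fun k _ => by
      rw [real_inner_smul_left, ContinuousLinearMap.adjoint_inner_left]
  have coco : ∀ z z' : H, ‖B z - B z'‖^2 ≤ β * ⟪B z - B z', z - z'⟫ := by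
    intro z z'
    have hc : ∀ k : Fin p, (0:ℝ) < ω k / ρ k := fun k => div_pos (hω k) (hρ k)
    set Q : ∀ k, G k := fun k => (L k z - P k (L k z)) - (L k z' - P k (L k z')) with hQdef
    have hdiff : B z - B z' = ∑ k, (ω k / ρ k) •
        (ContinuousLinearMap.adjoint (L k)) (Q k) := by
      simp only [hBdef, hQdef]
      rw [← Finset.sum_sub_distrib]
      exact Finset.sum_congr rfl fun k _ => by rw [← smul_sub, ← map_sub]
    have h1 : ⟪B z - B z', z - z'⟫ = ∑ k, (ω k / ρ k) * ⟪Q k, L k (z - z')⟫ := by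
      rw [hdiff, sum_inner]
      exact Finset.sum_congr rfl fun k _ => by
        rw [real_inner_smul_left, ContinuousLinearMap.adjoint_inner_left]
    have h2 : ∀ k : Fin p, ‖Q k‖^2 ≤ ⟪Q k, L k (z - z')⟫ := by
      intro k
      have := firmQ k (L k z) (L k z')
      rw [map_sub]
      rw [real_inner_comm]
      simpa only [hQdef] using this
    have hsumlb : (∑ k, (ω k / ρ k) * ‖Q k‖^2) ≤ ⟪B z - B z', z - z'⟫ := by
      rw [h1]
      exact Finset.sum_le_sum fun k _ => mul_le_mul_of_nonneg_left (h2 k) (hc k).le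
    have h3 : ‖B z - B z'‖ ≤ ∑ k, (ω k / ρ k) * (‖L k‖ * ‖Q k‖) := by
      rw [hdiff]
      refine (norm_sum_le _ _).trans (Finset.sum_le_sum fun k _ => ?_)
      rw [norm_smul, Real.norm_eq_abs, abs_of_pos (hc k)]
      refine mul_le_mul_of_nonneg_left ?_ (hc k).le
      refine ((ContinuousLinearMap.adjoint (L k)).le_opNorm (Q k)).trans ?_
      have : ‖ContinuousLinearMap.adjoint (L k)‖ = ‖L k‖ :=
        ContinuousLinearMap.adjoint.norm_map (L k)
      rw [this]
    have hCS := Finset.sum_mul_sq_le_sq_mul_sq Finset.univ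
        (fun k => Real.sqrt (ω k / ρ k) * ‖L k‖) (fun k => Real.sqrt (ω k / ρ k) * ‖Q k‖)
    have e1 : (∑ k, (Real.sqrt (ω k / ρ k) * ‖L k‖) * (Real.sqrt (ω k / ρ k) * ‖Q k‖))
        = ∑ k, (ω k / ρ k) * (‖L k‖ * ‖Q k‖) :=
      Finset.sum_congr rfl fun k _ => by
        rw [show (Real.sqrt (ω k / ρ k) * ‖L k‖) * (Real.sqrt (ω k / ρ k) * ‖Q k‖)
          = (Real.sqrt (ω k / ρ k) * Real.sqrt (ω k / ρ k)) * (‖L k‖ * ‖Q k‖) from by ring,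
          Real.mul_self_sqrt (hc k).le]
    have e2 : (∑ k, (Real.sqrt (ω k / ρ k) * ‖L k‖)^2) = β := by
      rw [hβ]
      exact Finset.sum_congr rfl fun k _ => by
        rw [mul_pow, Real.sq_sqrt (hc k).le]; ring
    have e3 : (∑ k, (Real.sqrt (ω k / ρ k) * ‖Q k‖)^2) = ∑ k, (ω k / ρ k) * ‖Q k‖^2 :=
      Finset.sum_congr rfl fun k _ => by rw [mul_pow, Real.sq_sqrt (hc k).le]
    rw [e1, e2, e3] at hCS
    have h4 : ‖B z - B z'‖^2 ≤ (∑ k, (ω k / ρ k) * (‖L k‖ * ‖Q k‖))^2 := by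
      have hnn : (0:ℝ) ≤ ‖B z - B z'‖ := norm_nonneg _
      exact pow_le_pow_left₀ hnn h3 2
    calc ‖B z - B z'‖^2 ≤ β * (∑ k, (ω k / ρ k) * ‖Q k‖^2) := h4.trans hCS
      _ ≤ β * ⟪B z - B z', z - z'⟫ := mul_le_mul_of_nonneg_left hsumlb hβ0.le
  have BLip : ∀ z z' : H, ‖B z - B z'‖ ≤ β * ‖z - z'‖ := by
    intro z z'
    by_cases h0 : ‖B z - B z'‖ = 0
    · rw [h0]; positivity
    · have hpos : 0 < ‖B z - B z'‖ := lt_of_le_of_ne (norm_nonneg _) (Ne.symm h0)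
      have h1 := coco z z'
      have h2 : ⟪B z - B z', z - z'⟫ ≤ ‖B z - B z'‖ * ‖z - z'‖ := real_inner_le_norm _ _
      have h4 := mul_le_mul_of_nonneg_left h2 hβ0.le
      have h3 : ‖B z - B z'‖ * ‖B z - B z'‖ ≤ (β * ‖z - z'‖) * ‖B z - B z'‖ := by nlinarith
      exact le_of_mul_le_mul_right h3 hpos
  -- convexity (gradient inequality) and descent lemma for the envelopes
  have egrad : ∀ k (u u' : G k), e k u + (1/ρ k) * ⟪u - P k u, u' - u⟫ ≤ e k u' := by
    intro k u u'
    have hρk := (hρ k).ne'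
    have hρk2 := hρ k
    have hvi := (hPvi k u).2 (P k u') (hPvi k u').1
    have hrel : ⟪u - P k u, P k u - P k u'⟫
        = ⟪u - P k u, u' - P k u'⟫ - ‖u - P k u‖^2 - ⟪u - P k u, u' - u⟫ := by
      rw [show P k u - P k u' = ((u' - P k u') - (u - P k u)) - (u' - u) from by abel,
        inner_sub_right, inner_sub_right, real_inner_self_eq_norm_sq]
    have hsq : (0:ℝ) ≤ ‖(u' - P k u') - (u - P k u)‖^2 := sq_nonneg _
    have hex : ‖(u' - P k u') - (u - P k u)‖^2
        = ‖u' - P k u'‖^2 - 2*⟪u - P k u, u' - P k u'⟫ + ‖u - P k u‖^2 := by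
      rw [norm_sub_sq_real, real_inner_comm]
    rw [← sub_nonneg]
    have hid : e k u' - (e k u + (1/ρ k) * ⟪u - P k u, u' - u⟫)
        = (1/(2*ρ k)) * (2*ρ k*(hr k (P k u') - hr k (P k u))
            + ‖u' - P k u'‖^2 - ‖u - P k u‖^2 - 2*⟪u - P k u, u' - u⟫) := by
      simp only [hedef]
      field_simp
      ring
    rw [hid]
    refine mul_nonneg (by positivity) ?_
    linarith [hvi, hsq, hex, hrel]
  have edesc : ∀ k (u u' : G k),
      e k u' ≤ e k u + (1/ρ k) * ⟪u - P k u, u' - u⟫ + 1/(2*ρ k) * ‖u' - u‖^2 := by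
    intro k u u'
    have hρk := (hρ k).ne'
    have hρk2 := hρ k
    have hmin := hPreal k u' (P k u) ((hPvi k u).1)
    have hex2 : ‖u' - P k u‖^2 = ‖u - P k u‖^2 + 2*⟪u - P k u, u' - u⟫ + ‖u' - u‖^2 := by
      rw [show u' - P k u = (u - P k u) + (u' - u) from by abel, norm_add_sq_real]
    rw [← sub_nonneg]
    have hid : e k u + (1/ρ k) * ⟪u - P k u, u' - u⟫ + 1/(2*ρ k) * ‖u' - u‖^2 - e k u'
        = (1/(2*ρ k)) * (2*(ρ k * hr k (P k u) + 1/2*‖u' - P k u‖^2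
              - (ρ k * hr k (P k u') + 1/2*‖u' - P k u'‖^2))
            + (‖u - P k u‖^2 + 2*⟪u - P k u, u' - u⟫ + ‖u' - u‖^2 - ‖u' - P k u‖^2)) := by
      simp only [hedef]
      field_simp
      ring
    rw [hid]
    refine mul_nonneg (by positivity) ?_
    linarith [hmin, hex2]
  have ggrad : ∀ z z' : H, g z + ⟪B z, z' - z⟫ ≤ g z' := by
    intro z z'
    have hip := hBip z (z' - z)
    have hterm : ∀ k : Fin p,
        ω k * e k (L k z) + (ω k / ρ k) * ⟪L k z - P k (L k z), L k (z' - z)⟫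
        ≤ ω k * e k (L k z') := by
      intro k
      have h1 := egrad k (L k z) (L k z')
      have h2 := mul_le_mul_of_nonneg_left h1 (hω k).le
      have h3 : L k (z' - z) = L k z' - L k z := map_sub _ _ _
      rw [h3]
      have h4 : ω k / ρ k = ω k * (1/ρ k) := by ring
      rw [h4]
      nlinarith [h2]
    calc g z + ⟪B z, z' - z⟫
        = ∑ k, (ω k * e k (L k z) + (ω k / ρ k) * ⟪L k z - P k (L k z), L k (z' - z)⟫) := by
          rw [hip]
          simp only [hgdef]
          rw [Finset.sum_add_distrib]
      _ ≤ ∑ k, ω k * e k (L k z') := Finset.sum_le_sum fun k _ => hterm k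
      _ = g z' := by simp only [hgdef]
  have gdesc : ∀ (z d : H) (t : ℝ), g (z + t • d) ≤ g z + t * ⟪B z, d⟫
      + t^2 * ∑ k, ω k * (1/(2*ρ k)) * ‖L k d‖^2 := by
    intro z d t
    have hterm : ∀ k : Fin p, ω k * e k (L k (z + t • d))
        ≤ ω k * e k (L k z) + t * ((ω k / ρ k) * ⟪L k z - P k (L k z), L k d⟫)
          + t^2 * (ω k * (1/(2*ρ k)) * ‖L k d‖^2) := by
      intro k
      have h0 := edesc k (L k z) (L k z + t • L k d)
      have h1 : L k (z + t • d) = L k z + t • L k d := by rw [map_add, map_smul]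
      have h2 : (L k z + t • L k d) - L k z = t • L k d := by abel
      rw [h2, real_inner_smul_right, norm_smul] at h0
      have h3 := mul_le_mul_of_nonneg_left h0 (hω k).le
      have habs : (‖(t:ℝ)‖ * ‖L k d‖)^2 = t^2 * ‖L k d‖^2 := by
        rw [mul_pow, Real.norm_eq_abs, sq_abs]
      rw [habs] at h3
      rw [h1]
      refine le_trans h3 (le_of_eq ?_)
      field_simp
    calc g (z + t • d) = ∑ k, ω k * e k (L k (z + t • d)) := by simp only [hgdef]
      _ ≤ ∑ k, (ω k * e k (L k z) + t * ((ω k / ρ k) * ⟪L k z - P k (L k z), L k d⟫)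
          + t^2 * (ω k * (1/(2*ρ k)) * ‖L k d‖^2)) := Finset.sum_le_sum fun k _ => hterm k
      _ = g z + t * ⟪B z, d⟫ + t^2 * ∑ k, ω k * (1/(2*ρ k)) * ‖L k d‖^2 := by
          rw [Finset.sum_add_distrib, Finset.sum_add_distrib, ← Finset.mul_sum, ← Finset.mul_sum,
            hBip]
  -- variational inequality at the solution
  have VIsol : ∀ w, f w ≠ ⊤ → fr xsol - fr w ≤ ⟪B xsol, w - xsol⟫ := by
    intro w hw
    set C : ℝ := ∑ k, ω k * (1/(2*ρ k)) * ‖L k (w - xsol)‖^2 with hCdef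
    have hC0 : 0 ≤ C := by
      rw [hCdef]
      refine Finset.sum_nonneg fun k _ => ?_
      have := (hω k); have := (hρ k)
      positivity
    have key : ∀ t : ℝ, 0 < t → t ≤ 1 → fr xsol - fr w ≤ ⟪B xsol, w - xsol⟫ + t * C := by
      intro t ht ht1
      have hcv := hf_convex xsol w (1-t) t (by linarith) ht.le (by ring)
      have hxw : (1-t) • xsol + t • w = xsol + t • (w - xsol) := by module
      rw [hxw] at hcv
      rw [show f xsol = ((fr xsol : ℝ):EReal) from (EReal.coe_toReal hsoltop (hf_ne_bot _)).symm,
        show f w = ((fr w : ℝ):EReal) from (EReal.coe_toReal hw (hf_ne_bot _)).symm,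
        ← EReal.coe_mul, ← EReal.coe_mul, ← EReal.coe_add] at hcv
      have hzt_ne : f (xsol + t • (w - xsol)) ≠ ⊤ := fun htop => by
        rw [htop] at hcv; exact (EReal.coe_ne_top _) (top_le_iff.1 hcv)
      have hfzt : fr (xsol + t • (w - xsol)) ≤ (1-t) * fr xsol + t * fr w := by
        rw [show f (xsol + t • (w - xsol)) = ((fr (xsol + t • (w - xsol)) : ℝ):EReal) from
          (EReal.coe_toReal hzt_ne (hf_ne_bot _)).symm, EReal.coe_le_coe_iff] at hcv
        exact hcv
      have hgd := gdesc xsol (w - xsol) t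
      rw [← hCdef] at hgd
      have hsr := hsolreal _ hzt_ne
      have hcomb : t * (fr xsol - fr w) ≤ t * (⟪B xsol, w - xsol⟫ + t * C) := by
        nlinarith [hsr, hfzt, hgd]
      exact le_of_mul_le_mul_left hcomb ht
    refine le_of_forall_pos_le_add fun δ hδ => ?_
    have hden : (0:ℝ) < C + 1 := by linarith
    have ht : 0 < min 1 (δ/(C+1)) := lt_min one_pos (div_pos hδ hden)
    have ht1 : min 1 (δ/(C+1)) ≤ 1 := min_le_left _ _
    have hk := key _ ht ht1
    have htC : min 1 (δ/(C+1)) * C ≤ δ := by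
      have h1 : min 1 (δ/(C+1)) ≤ δ/(C+1) := min_le_right _ _
      have h2 : min 1 (δ/(C+1)) * C ≤ (δ/(C+1)) * C := mul_le_mul_of_nonneg_right h1 hC0
      calc min 1 (δ/(C+1)) * C ≤ (δ/(C+1)) * C := h2
        _ ≤ δ := by
            rw [div_mul_eq_mul_div, div_le_iff₀ hden]
            nlinarith
    linarith
  -- variational inequality for the iterates
  have hγpos : ∀ n, 0 < γ n := fun n => lt_of_lt_of_le hε (hγ n).1
  have iterVI : ∀ n, f (x (n+1)) ≠ ⊤ ∧ ∀ w, f w ≠ ⊤ →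
      γ n * (fr (x (n+1)) - fr w) ≤ ⟪(x n - γ n • B (x n)) - x (n+1), x (n+1) - w⟫ := by
    intro n
    refine prox_vi hf_convex hf_ne_bot ⟨z₀, hz₀⟩ (hγpos n) (x n - γ n • B (x n)) (x (n+1)) ?_
    intro w
    simpa only [hBdef] using hiter n w
  -- Fejér-type inequality
  have fejer : ∀ (s : H), f s ≠ ⊤ →
      (∀ w, f w ≠ ⊤ → fr s - fr w ≤ ⟪B s, w - s⟫) →
      ∀ n, ‖x (n+1) - s‖^2 + γ n * (2/β - γ n) * ‖B (x n) - B s‖^2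
          + ‖(x n - x (n+1)) - γ n • (B (x n) - B s)‖^2 ≤ ‖x n - s‖^2 := by
    intro s hs hVI n
    have h1 := (iterVI n).2 s hs
    have h2 := hVI (x (n+1)) (iterVI n).1
    have h2' := mul_le_mul_of_nonneg_left h2 (hγpos n).le
    have hrw : ⟪(x n - γ n • B (x n)) - x (n+1), x (n+1) - s⟫ + γ n * ⟪B s, x (n+1) - s⟫
        = ⟪(x n - x (n+1)) - γ n • (B (x n) - B s), x (n+1) - s⟫ := by
      have e1 : (x n - γ n • B (x n)) - x (n+1) = (x n - x (n+1)) - γ n • B (x n) := by abel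
      have e2 : (x n - x (n+1)) - γ n • (B (x n) - B s)
          = ((x n - x (n+1)) - γ n • B (x n)) + γ n • B s := by rw [smul_sub]; abel
      rw [e1, e2, inner_add_left, inner_sub_left, real_inner_smul_left, real_inner_smul_left]
    have hkey : (0:ℝ) ≤ ⟪(x n - x (n+1)) - γ n • (B (x n) - B s), x (n+1) - s⟫ := by
      rw [← hrw]; linarith [h1, h2']
    have hud : x (n+1) - s = (x n - s) - (x n - x (n+1)) := by abel
    rw [hud] at hkey
    have hkey2 : (0:ℝ) ≤ ⟪x n - x (n+1), x n - s⟫ - ‖x n - x (n+1)‖^2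
        - (γ n * ⟪B (x n) - B s, x n - s⟫ - γ n * ⟪B (x n) - B s, x n - x (n+1)⟫) := by
      have hexp : ⟪(x n - x (n+1)) - γ n • (B (x n) - B s), (x n - s) - (x n - x (n+1))⟫
          = ⟪x n - x (n+1), x n - s⟫ - ‖x n - x (n+1)‖^2
            - (γ n * ⟪B (x n) - B s, x n - s⟫ - γ n * ⟪B (x n) - B s, x n - x (n+1)⟫) := by
        rw [show ‖x n - x (n+1)‖^2 = ⟪x n - x (n+1), x n - x (n+1)⟫ from
          (real_inner_self_eq_norm_sq _).symm]
        simp only [inner_sub_left, inner_sub_right, real_inner_smul_left]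
        ring
      linarith [hkey, hexp.symm.le, hexp.le]
    have hcoco := coco (x n) s
    have hA : ‖(x n - s) - (x n - x (n+1))‖^2
        = ‖x n - s‖^2 - 2*⟪x n - x (n+1), x n - s⟫ + ‖x n - x (n+1)‖^2 := by
      rw [norm_sub_sq_real, real_inner_comm]
    have hB2 : ‖(x n - x (n+1)) - γ n • (B (x n) - B s)‖^2
        = ‖x n - x (n+1)‖^2 - 2*(γ n * ⟪B (x n) - B s, x n - x (n+1)⟫)
          + (γ n)^2*‖B (x n) - B s‖^2 := by
      rw [norm_sub_sq_real, real_inner_smul_right, real_inner_comm, norm_smul,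
        mul_pow, Real.norm_eq_abs, sq_abs]
    have h5 : γ n * (‖B (x n) - B s‖^2/β) ≤ γ n * ⟪B (x n) - B s, x n - s⟫ := by
      refine mul_le_mul_of_nonneg_left ?_ (hγpos n).le
      rw [div_le_iff₀ hβ0]
      linarith [hcoco]
    have hq2 : γ n * (2/β - γ n) * ‖B (x n) - B s‖^2
        = 2*(γ n * (‖B (x n) - B s‖^2/β)) - (γ n)^2*‖B (x n) - B s‖^2 := by
      field_simp
    rw [hud]
    linarith [hkey2, h5, hA, hB2, hq2]
  -- step sizes bounded away from the ends
  have hstep : ∀ n, ε*ε ≤ γ n * (2/β - γ n) := by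
    intro n
    have h1 := (hγ n).1
    have h2 := (hγ n).2
    have h3 : ε ≤ 2/β - γ n := by linarith
    have h4 : 0 < γ n := hγpos n
    nlinarith
  have fej0 := fejer xsol hsoltop VIsol
  have hmono : ∀ (s : H),
      (∀ n, ‖x (n+1) - s‖^2 + γ n * (2/β - γ n) * ‖B (x n) - B s‖^2
        + ‖(x n - x (n+1)) - γ n • (B (x n) - B s)‖^2 ≤ ‖x n - s‖^2) →
      ∀ n, ‖x (n+1) - s‖ ≤ ‖x n - s‖ := by
    intro s hf n
    have h1 := hf n
    have h2 : 0 ≤ γ n * (2/β - γ n) * ‖B (x n) - B s‖^2 :=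
      mul_nonneg (le_trans (mul_nonneg hε.le hε.le) (hstep n)) (sq_nonneg _)
    have h3 : (0:ℝ) ≤ ‖(x n - x (n+1)) - γ n • (B (x n) - B s)‖^2 := sq_nonneg _
    nlinarith [norm_nonneg (x (n+1) - s), norm_nonneg (x n - s)]
  have hmono0 := hmono xsol fej0
  have hbd : ∀ n, ‖x n - xsol‖ ≤ ‖x 0 - xsol‖ := by
    intro n
    induction n with
    | zero => exact le_refl _
    | succ m ih => exact (hmono0 m).trans ih
  -- summable decrements
  set S : ℕ → ℝ := fun n => ε*ε*‖B (x n) - B xsol‖^2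
      + ‖(x n - x (n+1)) - γ n • (B (x n) - B xsol)‖^2 with hSdef
  have hS0 : ∀ n, 0 ≤ S n := fun n =>
    add_nonneg (mul_nonneg (mul_nonneg hε.le hε.le) (sq_nonneg _)) (sq_nonneg _)
  have hSle : ∀ n, S n ≤ ‖x n - xsol‖^2 - ‖x (n+1) - xsol‖^2 := by
    intro n
    have h1 := fej0 n
    have h2 : ε*ε*‖B (x n) - B xsol‖^2 ≤ γ n * (2/β - γ n) * ‖B (x n) - B xsol‖^2 :=
      mul_le_mul_of_nonneg_right (hstep n) (sq_nonneg _)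
    simp only [hSdef]
    linarith
  have hSsum : Summable S := by
    apply summable_of_sum_range_le (c := ‖x 0 - xsol‖^2) hS0
    intro m
    have h1 : ∑ i ∈ Finset.range m, S i ≤ ∑ i ∈ Finset.range m,
        (‖x i - xsol‖^2 - ‖x (i+1) - xsol‖^2) := Finset.sum_le_sum fun i _ => hSle i
    rw [Finset.sum_range_sub' (fun i => ‖x i - xsol‖^2)] at h1
    have h2 : (0:ℝ) ≤ ‖x m - xsol‖^2 := sq_nonneg _
    linarith
  have hStend : Tendsto S atTop (𝓝 0) := hSsum.tendsto_atTop_zero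
  -- the two squared quantities tend to zero
  have hsq1 : Tendsto (fun n => ‖B (x n) - B xsol‖^2) atTop (𝓝 0) := by
    have hεε : (0:ℝ) < ε*ε := mul_pos hε hε
    have hb : ∀ n, ‖B (x n) - B xsol‖^2 ≤ S n / (ε*ε) := by
      intro n
      rw [le_div_iff₀ hεε]
      have h2 : ε*ε*‖B (x n) - B xsol‖^2 ≤ S n := by
        simp only [hSdef]
        nlinarith [sq_nonneg ‖(x n - x (n+1)) - γ n • (B (x n) - B xsol)‖]
      linarith
    refine squeeze_zero (fun n => sq_nonneg _) hb ?_
    simpa using hStend.div_const (ε*ε)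
  have hsq2 : Tendsto (fun n => ‖(x n - x (n+1)) - γ n • (B (x n) - B xsol)‖^2) atTop (𝓝 0) := by
    apply squeeze_zero (fun n => sq_nonneg _) (fun n => ?_) hStend
    simp only [hSdef]
    nlinarith [mul_nonneg (mul_nonneg hε.le hε.le) (sq_nonneg ‖B (x n) - B xsol‖)]
  have sqrt_tend : ∀ (u : ℕ → H), Tendsto (fun n => ‖u n‖^2) atTop (𝓝 0) →
      Tendsto (fun n => ‖u n‖) atTop (𝓝 0) := by
    intro u hu
    have h2 := (Real.continuous_sqrt.tendsto 0).comp hu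
    simp only [Function.comp_def, Real.sqrt_zero] at h2
    have h3 : (fun n => Real.sqrt (‖u n‖^2)) = fun n => ‖u n‖ :=
      funext fun n => Real.sqrt_sq (norm_nonneg _)
    rwa [h3] at h2
  have hBtends : Tendsto (fun n => ‖B (x n) - B xsol‖) atTop (𝓝 0) :=
    sqrt_tend (fun n => B (x n) - B xsol) hsq1
  have hwt : Tendsto (fun n => ‖(x n - x (n+1)) - γ n • (B (x n) - B xsol)‖) atTop (𝓝 0) :=
    sqrt_tend _ hsq2
  have hdiff : Tendsto (fun n => ‖x n - x (n+1)‖) atTop (𝓝 0) := by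
    apply squeeze_zero (fun n => norm_nonneg _)
      (g := fun n => ‖(x n - x (n+1)) - γ n • (B (x n) - B xsol)‖ + (2/β)*‖B (x n) - B xsol‖)
    · intro n
      have h0 : ‖x n - x (n+1)‖ ≤ ‖(x n - x (n+1)) - γ n • (B (x n) - B xsol)‖
          + ‖γ n • (B (x n) - B xsol)‖ := by
        have h1 := norm_add_le ((x n - x (n+1)) - γ n • (B (x n) - B xsol))
          (γ n • (B (x n) - B xsol))
        rwa [show (x n - x (n+1)) - γ n • (B (x n) - B xsol) + γ n • (B (x n) - B xsol)
          = x n - x (n+1) from by abel] at h1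
      have h2 : ‖γ n • (B (x n) - B xsol)‖ = γ n * ‖B (x n) - B xsol‖ := by
        rw [norm_smul, Real.norm_eq_abs, abs_of_pos (hγpos n)]
      have h3 : γ n * ‖B (x n) - B xsol‖ ≤ (2/β) * ‖B (x n) - B xsol‖ := by
        refine mul_le_mul_of_nonneg_right ?_ (norm_nonneg _)
        have := (hγ n).2
        linarith [hε]
      linarith [h0, h2.le, h2.ge, h3]
    · simpa using hwt.add (hBtends.const_mul (2/β))
  -- a convergent subsequence
  have hbdd : ∀ n, x n ∈ Metric.closedBall xsol ‖x 0 - xsol‖ := fun n => by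
    simpa [Metric.mem_closedBall, dist_eq_norm] using hbd n
  obtain ⟨xbar, -, φ, hφmono, hφtend⟩ :=
    tendsto_subseq_of_bounded Metric.isBounded_closedBall hbdd
  have hφat : Tendsto φ atTop atTop := hφmono.tendsto_atTop
  have hBsub : Tendsto (fun j => B (x (φ j))) atTop (𝓝 (B xsol)) := by
    rw [tendsto_iff_norm_sub_tendsto_zero]
    exact hBtends.comp hφat
  have hBbar : Tendsto (fun j => B (x (φ j))) atTop (𝓝 (B xbar)) := by
    rw [tendsto_iff_norm_sub_tendsto_zero]
    refine squeeze_zero (fun j => norm_nonneg _) (fun j => BLip (x (φ j)) xbar) ?_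
    have h1 : Tendsto (fun j => ‖x (φ j) - xbar‖) atTop (𝓝 0) :=
      tendsto_iff_norm_sub_tendsto_zero.1 hφtend
    simpa using h1.const_mul β
  have hBeq : B xbar = B xsol := tendsto_nhds_unique hBbar hBsub
  have hxsucc : Tendsto (fun j => x (φ j + 1)) atTop (𝓝 xbar) := by
    have h1 : Tendsto (fun j => x (φ j) - x (φ j + 1)) atTop (𝓝 0) := by
      rw [tendsto_zero_iff_norm_tendsto_zero]
      exact hdiff.comp hφat
    have h2 := hφtend.sub h1
    simpa [sub_sub_cancel] using h2
  -- bound for inner products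
  have hMb : ∀ (w : H) (n : ℕ), ‖x (n+1) - w‖ ≤ ‖x 0 - xsol‖ + ‖xsol - w‖ := by
    intro w n
    rw [show x (n+1) - w = (x (n+1) - xsol) + (xsol - w) from by abel]
    exact (norm_add_le _ _).trans (add_le_add_left (hbd (n+1)) _)
  -- the limit point satisfies the variational inequality
  have VIbar0 : ∀ w, f w ≠ ⊤ → f xbar ≤ ((fr w - ⟪B xbar, xbar - w⟫ : ℝ) : EReal) := by
    intro w hw
    have hstepj : ∀ j, fr (x (φ j + 1)) ≤ fr w
        + (1/γ (φ j)) * ⟪x (φ j) - x (φ j + 1), x (φ j + 1) - w⟫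
        - ⟪B (x (φ j)), x (φ j + 1) - w⟫ := by
      intro j
      set n := φ j with hn
      have h1 := (iterVI n).2 w hw
      have hrw2 : ⟪(x n - γ n • B (x n)) - x (n+1), x (n+1) - w⟫
          = ⟪x n - x (n+1), x (n+1) - w⟫ - γ n * ⟪B (x n), x (n+1) - w⟫ := by
        rw [show (x n - γ n • B (x n)) - x (n+1) = (x n - x (n+1)) - γ n • B (x n) from by abel,
          inner_sub_left, real_inner_smul_left]
      rw [hrw2] at h1
      have hγn := hγpos n
      rw [← sub_nonneg]
      have hid : fr w + (1/γ n) * ⟪x n - x (n+1), x (n+1) - w⟫ - ⟪B (x n), x (n+1) - w⟫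
          - fr (x (n+1))
          = (1/γ n) * ((⟪x n - x (n+1), x (n+1) - w⟫ - γ n * ⟪B (x n), x (n+1) - w⟫)
              - γ n * (fr (x (n+1)) - fr w)) := by
        field_simp
        ring
      rw [hid]
      exact mul_nonneg (by positivity) (by linarith)
    have hmid : Tendsto (fun j => (1/γ (φ j)) * ⟪x (φ j) - x (φ j + 1), x (φ j + 1) - w⟫)
        atTop (𝓝 0) := by
      apply squeeze_zero_norm
        (a := fun j => (1/ε) * (‖x (φ j) - x (φ j + 1)‖ * (‖x 0 - xsol‖ + ‖xsol - w‖)))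
      · intro j
        have hb1 : |1/γ (φ j)| ≤ 1/ε := by
          rw [abs_of_pos (one_div_pos.2 (hγpos (φ j)))]
          exact one_div_le_one_div_of_le hε (hγ (φ j)).1
        have hb2 : |⟪x (φ j) - x (φ j + 1), x (φ j + 1) - w⟫|
            ≤ ‖x (φ j) - x (φ j + 1)‖ * (‖x 0 - xsol‖ + ‖xsol - w‖) :=
          (abs_real_inner_le_norm _ _).trans
            (mul_le_mul_of_nonneg_left (hMb w (φ j)) (norm_nonneg _))
        rw [Real.norm_eq_abs, abs_mul]
        exact mul_le_mul hb1 hb2 (abs_nonneg _) (by positivity)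
      · have h0 : Tendsto (fun j => ‖x (φ j) - x (φ j + 1)‖) atTop (𝓝 0) := hdiff.comp hφat
        simpa using (h0.mul_const (‖x 0 - xsol‖ + ‖xsol - w‖)).const_mul (1/ε)
    have hlast : Tendsto (fun j => ⟪B (x (φ j)), x (φ j + 1) - w⟫) atTop
        (𝓝 ⟪B xbar, xbar - w⟫) := hBbar.inner (hxsucc.sub_const w)
    have hlim : Tendsto (fun j => fr w
        + (1/γ (φ j)) * ⟪x (φ j) - x (φ j + 1), x (φ j + 1) - w⟫
        - ⟪B (x (φ j)), x (φ j + 1) - w⟫) atTop (𝓝 (fr w - ⟪B xbar, xbar - w⟫)) := by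
      have h9 := (tendsto_const_nhds (x := fr w) (f := atTop (α := ℕ))).add hmid
      have h10 := h9.sub hlast
      simpa using h10
    exact lsc_seq hf_lsc hxsucc hlim (fun j => by
      rw [show f (x (φ j + 1)) = ((fr (x (φ j + 1)) : ℝ) : EReal) from
        (EReal.coe_toReal (iterVI (φ j)).1 (hf_ne_bot _)).symm, EReal.coe_le_coe_iff]
      exact hstepj j)
  have hbartop : f xbar ≠ ⊤ := fun htop => by
    have h0 := VIbar0 z₀ hz₀
    rw [htop] at h0
    exact (EReal.coe_ne_top _) (top_le_iff.1 h0)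
  have VIbar : ∀ w, f w ≠ ⊤ → fr xbar - fr w ≤ ⟪B xbar, w - xbar⟫ := by
    intro w hw
    have h0 := VIbar0 w hw
    rw [show f xbar = ((fr xbar : ℝ) : EReal) from
      (EReal.coe_toReal hbartop (hf_ne_bot _)).symm, EReal.coe_le_coe_iff] at h0
    have h1 : ⟪B xbar, w - xbar⟫ = -⟪B xbar, xbar - w⟫ := by
      rw [show w - xbar = -(xbar - w) from by abel, inner_neg_right]
    linarith [h0, h1.le, h1.ge]
  -- the limit point is a minimizer
  have minbar : ∀ z, f z ≠ ⊤ → fr xbar + g xbar ≤ fr z + g z := by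
    intro z hz
    have h1 := VIbar z hz
    have h2 := ggrad xbar z
    linarith
  -- Fejér monotonicity with respect to the limit point, full convergence
  have hmonobar := hmono xbar (fejer xbar hbartop VIbar)
  have hanti : Antitone (fun n => ‖x n - xbar‖) := antitone_nat_of_succ_le hmonobar
  have hbddBelow : BddBelow (Set.range fun n => ‖x n - xbar‖) :=
    ⟨0, fun y hy => by obtain ⟨n, hn⟩ := hy; rw [← hn]; exact norm_nonneg _⟩
  have htendsInf : Tendsto (fun n => ‖x n - xbar‖) atTop (𝓝 (⨅ n, ‖x n - xbar‖)) :=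
    tendsto_atTop_ciInf hanti hbddBelow
  have hsub0 : Tendsto (fun j => ‖x (φ j) - xbar‖) atTop (𝓝 0) :=
    tendsto_iff_norm_sub_tendsto_zero.1 hφtend
  have hsubInf : Tendsto (fun j => ‖x (φ j) - xbar‖) atTop (𝓝 (⨅ n, ‖x n - xbar‖)) :=
    htendsInf.comp hφat
  have hInf0 : (⨅ n, ‖x n - xbar‖) = 0 := tendsto_nhds_unique hsubInf hsub0
  have hxtend : Tendsto x atTop (𝓝 xbar) := by
    rw [tendsto_iff_norm_sub_tendsto_zero]
    rw [← hInf0]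
    exact htendsInf
  refine ⟨xbar, hxtend, fun z => ?_⟩
  rw [SumEq xbar, SumEq z]
  by_cases hz : f z = ⊤
  · rw [hz, EReal.top_add_coe]
    exact le_top
  · rw [show f xbar = ((fr xbar : ℝ) : EReal) from
      (EReal.coe_toReal hbartop (hf_ne_bot _)).symm,
      show f z = ((fr z : ℝ) : EReal) from (EReal.coe_toReal hz (hf_ne_bot _)).symm,
      ← EReal.coe_add, ← EReal.coe_add, EReal.coe_le_coe_iff]
    exact minbar z hz
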